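/- Let 1 ≤ d ≤ n and I ∈ I(d,n) with associated set β(I) = {β_1, …, β_k} defined via the pairing map. Then: (1) each β_r is an element of R_{d,n}; precisely, if I_{r−1} = [1, …, s, i_{s+1}, …, i_d] with s = s(I_{r−1}), then β_r = ω(Spec(I_{r−1}) \ Spec(I_r)) = ε_{i_d} − ε_{s+1} = α_{s+1, i_d − 1}; and (2) β(I) is an antichain in the poset R_{d,n}. -/

import Mathlib

/-- `I(d,n)`: strictly increasing `d`-tuples with entries in `{1, …, n}`. -/
def Idn (d n : ℕ) : Type :=
  {v : Fin d → ℕ // StrictMono v ∧ ∀ t : Fin d, 1 ≤ v t ∧ v t ≤ n}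

/-- Join (componentwise maximum) on `I(d,n)`. -/
def idnJoin {d n : ℕ} (a b : Idn d n) : Idn d n :=
  ⟨fun t => max (a.val t) (b.val t), by
    constructor
    · intro i j hij
      exact max_lt_max (a.prop.1 hij) (b.prop.1 hij)
    · intro t
      exact ⟨le_max_of_le_left (a.prop.2 t).1,
        max_le (a.prop.2 t).2 (b.prop.2 t).2⟩⟩

/-- Join-irreducible elements of `I(d,n)`. -/
def idnJI {d n : ℕ} (I : Idn d n) : Prop :=
  ∀ a b : Idn d n, I = idnJoin a b → I = a ∨ I = b

/-- The componentwise partial order on `I(d,n)`. -/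
def idnLE {d n : ℕ} (a b : Idn d n) : Prop := ∀ r : Fin d, a.val r ≤ b.val r

/-- The basis vector `ε_i` of `ℝ^n` (coordinates indexed by `1, …, n ∈ ℕ`). -/
def vecEps (i : ℕ) : ℕ → ℝ := fun j => if j = i then 1 else 0

/-- The last index `d - 1` of `Fin d`. -/
def lastIdx (d : ℕ) (hd : 0 < d) : Fin d := ⟨d - 1, Nat.sub_lt hd one_pos⟩

section Aux
variable {d n : ℕ}

lemma idn_lb (m : Idn d n) : ∀ j (h : j < d), j + 1 ≤ m.val ⟨j, h⟩ := by
  intro j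
  induction j with
  | zero => intro h; exact (m.prop.2 ⟨0, h⟩).1
  | succ j ih =>
    intro h
    have h' : j < d := Nat.lt_of_succ_lt h
    have h2 : m.val ⟨j, h'⟩ < m.val ⟨j+1, h⟩ := m.prop.1 (by simp [Fin.lt_def])
    have := ih h'
    omega

lemma idn_gap (m : Idn d n) : ∀ j (hj : j < d) i (hi : i < d), i ≤ j →
    m.val ⟨i, hi⟩ + (j - i) ≤ m.val ⟨j, hj⟩ := by
  intro j
  induction j with
  | zero =>
    intro hj i hi hij
    have : i = 0 := by omega
    subst this; simp
  | succ j ih =>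
    intro hj i hi hij
    rcases Nat.eq_or_lt_of_le hij with h | h
    · subst h; simp
    · have hj' : j < d := Nat.lt_of_succ_lt hj
      have h1 := ih hj' i hi (by omega)
      have h2 : m.val ⟨j, hj'⟩ < m.val ⟨j+1, hj⟩ := m.prop.1 (by simp [Fin.lt_def])
      omega

lemma strictMono_of_adj {v : Fin d → ℕ}
    (h : ∀ i (hi : i + 1 < d), v ⟨i, Nat.lt_of_succ_lt hi⟩ < v ⟨i+1, hi⟩) : StrictMono v := by
  have key : ∀ j (hj : j < d) i (hi : i < d), i < j → v ⟨i, hi⟩ < v ⟨j, hj⟩ := by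
    intro j
    induction j with
    | zero => intro hj i hi hij; exact absurd hij (Nat.not_lt_zero i)
    | succ j ih =>
      intro hj i hi hij
      rcases Nat.lt_or_ge i j with h' | h'
      · exact lt_trans (ih (Nat.lt_of_succ_lt hj) i hi h') (h j hj)
      · have : i = j := by omega
        subst this; exact h i hj
  intro a b hab
  have := key b.1 b.isLt a.1 a.isLt hab
  simpa using this

end Aux

section Aux2
variable {d n : ℕ}

/-- The join-irreducible candidate `[1, …, a, t+1, …, t+1+(d-1-a)]` (0-based index `a`). -/
def mkel (d n a t : ℕ) (hd : 0 < d) (hdn : d ≤ n) : Idn d n :=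
  if h : a < d ∧ a + 1 ≤ t ∧ t + d ≤ n + a then
    ⟨fun i => if (i : ℕ) < a then (i : ℕ) + 1 else t + 1 + ((i : ℕ) - a), by
      constructor
      · apply strictMono_of_adj
        intro i hi
        simp only
        split_ifs <;> omega
      · intro i
        have hi := i.isLt
        simp only
        split_ifs <;> omega⟩
  else ⟨fun i => (i : ℕ) + 1, by
    constructor
    · apply strictMono_of_adj
      intro i hi; simp
    · intro i
      have hi := i.isLt
      constructor
      · show 1 ≤ (i : ℕ) + 1
        omega
      · show (i : ℕ) + 1 ≤ n
        omega⟩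

lemma mkel_val {a t : ℕ} (hd : 0 < d) (hdn : d ≤ n) (h : a < d ∧ a + 1 ≤ t ∧ t + d ≤ n + a)
    (i : Fin d) :
    (mkel d n a t hd hdn).val i = if (i : ℕ) < a then (i : ℕ) + 1 else t + 1 + ((i : ℕ) - a) := by
  unfold mkel
  exact congrFun (congrArg Subtype.val (dif_pos h)) i

lemma mkel_eq_of (hd : 0 < d) (hdn : d ≤ n) {a t : ℕ} (h : a < d ∧ a + 1 ≤ t ∧ t + d ≤ n + a)
    (x : Idn d n)
    (hle : ∀ i : Fin d, x.val i ≤ (mkel d n a t hd hdn).val i)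
    (hxa : x.val ⟨a, h.1⟩ = t + 1) : x = mkel d n a t hd hdn := by
  apply Subtype.ext; funext i
  have hv := mkel_val hd hdn h i
  have hlb : (i : ℕ) + 1 ≤ x.val i := by
    have := idn_lb x i.1 i.isLt
    simpa using this
  have hub := hle i
  by_cases hia : (i : ℕ) < a
  · rw [hv, if_pos hia] at hub ⊢
    omega
  · push_neg at hia
    have hgap := idn_gap x i.1 i.isLt a h.1 hia
    rw [hxa] at hgap
    rw [hv, if_neg (by omega)] at hub ⊢
    simp only [Fin.eta] at hgap
    omega

lemma mkel_ji (hd : 0 < d) (hdn : d ≤ n) {a t : ℕ} (h : a < d ∧ a + 1 ≤ t ∧ t + d ≤ n + a) :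
    idnJI (mkel d n a t hd hdn) := by
  intro x y heq
  have hval : ∀ i : Fin d, (mkel d n a t hd hdn).val i = max (x.val i) (y.val i) := by
    intro i; rw [heq]; rfl
  have hx : ∀ i : Fin d, x.val i ≤ (mkel d n a t hd hdn).val i := by
    intro i; rw [hval i]; exact le_max_left _ _
  have hy : ∀ i : Fin d, y.val i ≤ (mkel d n a t hd hdn).val i := by
    intro i; rw [hval i]; exact le_max_right _ _
  have ha : (mkel d n a t hd hdn).val ⟨a, h.1⟩ = t + 1 := by
    rw [mkel_val hd hdn h]; simp
  rcases max_choice (x.val ⟨a, h.1⟩) (y.val ⟨a, h.1⟩) with hc | hc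
  · left
    exact (mkel_eq_of hd hdn h x hx (by rw [← hc, ← hval, ha])).symm
  · right
    exact (mkel_eq_of hd hdn h y hy (by rw [← hc, ← hval, ha])).symm

lemma idn_lb' (m : Idn d n) (i : Fin d) : (i : ℕ) + 1 ≤ m.val i := by
  have := idn_lb m i.1 i.isLt
  simpa using this

def truncX (m : Idn d n) (j : ℕ) (hj : j < d) : Idn d n :=
  ⟨fun i => if (i : ℕ) ≤ j then m.val i else m.val ⟨j, hj⟩ + ((i : ℕ) - j), by
    constructor
    · apply strictMono_of_adj
      intro i hi
      have hi' : i < d := Nat.lt_of_succ_lt hi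
      have g0 : m.val ⟨i, Nat.lt_of_succ_lt hi⟩ < m.val ⟨i+1, hi⟩ :=
        m.prop.1 (by simp [Fin.lt_def])
      simp only
      by_cases h1 : i ≤ j
      · have g1 := idn_gap m j hj i (Nat.lt_of_succ_lt hi) h1
        rw [if_pos (show ((⟨i, Nat.lt_of_succ_lt hi⟩ : Fin d) : ℕ) ≤ j from h1)]
        split_ifs <;> omega
      · rw [if_neg (show ¬ ((⟨i, Nat.lt_of_succ_lt hi⟩ : Fin d) : ℕ) ≤ j from h1),
          if_neg (show ¬ ((⟨i+1, hi⟩ : Fin d) : ℕ) ≤ j by simp; omega)]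
        omega
    · intro i
      simp only
      split_ifs with h1
      · exact m.prop.2 i
      · have hgap := idn_gap m i.1 i.isLt j hj (by omega)
        have hub := (m.prop.2 ⟨i.1, i.isLt⟩).2
        have h1' := (m.prop.2 ⟨j, hj⟩).1
        constructor <;> omega⟩

def truncY (m : Idn d n) (j : ℕ) (hj : j < d) : Idn d n :=
  ⟨fun i => if (i : ℕ) ≤ j then (i : ℕ) + 1 else m.val i, by
    constructor
    · apply strictMono_of_adj
      intro i hi
      have g0 : m.val ⟨i, Nat.lt_of_succ_lt hi⟩ < m.val ⟨i+1, hi⟩ :=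
        m.prop.1 (by simp [Fin.lt_def])
      have g1 := idn_lb m (i+1) hi
      simp only
      split_ifs <;> omega
    · intro i
      have hlb := idn_lb' m i
      have hub := (m.prop.2 i).2
      have hid := i.isLt
      simp only
      split_ifs <;> constructor <;> omega⟩

lemma ji_step (hdn : d ≤ n) (m : Idn d n) (hm : idnJI m) (j : ℕ) (hj1 : j + 1 < d)
    (hdev : m.val ⟨j, Nat.lt_of_succ_lt hj1⟩ ≠ j + 1) :
    m.val ⟨j + 1, hj1⟩ = m.val ⟨j, Nat.lt_of_succ_lt hj1⟩ + 1 := by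
  have hj : j < d := Nat.lt_of_succ_lt hj1
  have hjoin : m = idnJoin (truncX m j hj) (truncY m j hj) := by
    apply Subtype.ext; funext i
    show m.val i = max ((truncX m j hj).val i) ((truncY m j hj).val i)
    simp only [truncX, truncY]
    by_cases hij : (i : ℕ) ≤ j
    · rw [if_pos hij, if_pos hij]
      have := idn_lb' m i
      omega
    · rw [if_neg hij, if_neg hij]
      have hgap := idn_gap m i.1 i.isLt j hj (by omega)
      have : m.val ⟨i.1, i.isLt⟩ = m.val i := by simp
      omega
  rcases hm _ _ hjoin with h | h
  · have hcast := congrArg (fun z : Idn d n => z.val ⟨j+1, hj1⟩) h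
    simp only [truncX] at hcast
    rw [if_neg (show ¬ ((⟨j+1, hj1⟩ : Fin d) : ℕ) ≤ j by simp)] at hcast
    rw [hcast]
    show m.val ⟨j, hj⟩ + ((j+1) - j) = m.val ⟨j, hj⟩ + 1
    omega
  · have hcast := congrArg (fun z : Idn d n => z.val ⟨j, hj⟩) h
    simp only [truncY] at hcast
    rw [if_pos (show ((⟨j, hj⟩ : Fin d) : ℕ) ≤ j from le_refl j)] at hcast
    exact absurd hcast hdev

lemma ji_tail (hdn : d ≤ n) (m : Idn d n) (hm : idnJI m) (a : ℕ) (ha : a < d)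
    (hdev : a + 2 ≤ m.val ⟨a, ha⟩) :
    ∀ i (hi : i < d), a ≤ i → m.val ⟨i, hi⟩ = m.val ⟨a, ha⟩ + (i - a) := by
  intro i
  induction i with
  | zero =>
    intro hi hai
    have : a = 0 := by omega
    subst this
    simp
  | succ i ih =>
    intro hi hai
    rcases Nat.eq_or_lt_of_le hai with h | h
    · subst h; simp
    · have hi' : i < d := Nat.lt_of_succ_lt hi
      have hprev := ih hi' (by omega)
      have hne : m.val ⟨i, Nat.lt_of_succ_lt hi⟩ ≠ i + 1 := by
        have : m.val ⟨i, hi'⟩ = m.val ⟨i, Nat.lt_of_succ_lt hi⟩ := rfl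
        omega
      have := ji_step hdn m hm i hi hne
      have heq : m.val ⟨i, Nat.lt_of_succ_lt hi⟩ = m.val ⟨i, hi'⟩ := rfl
      omega

lemma idn_gap' (m : Idn d n) (i j : Fin d) (hij : (i : ℕ) ≤ (j : ℕ)) :
    m.val i + ((j : ℕ) - (i : ℕ)) ≤ m.val j := by
  have := idn_gap m j.1 j.isLt i.1 i.isLt hij
  simpa using this

lemma telescope (f : ℕ → ℕ → ℝ) (m : ℕ) : ∀ N, m ≤ N →
    ∑ i ∈ Finset.Ico m N, (f (i+1) - f i) = f N - f m := by
  intro N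
  induction N with
  | zero => intro h; interval_cases m; simp
  | succ N ih =>
    intro h
    rcases Nat.eq_or_lt_of_le h with h' | h'
    · subst h'; simp
    · rw [Finset.sum_Ico_succ_top (by omega), ih (by omega)]
      abel

def vJfun (d n : ℕ) (J : Idn d n) : ℕ → ℕ :=
  fun j => if h : j < d then J.val ⟨j, h⟩ else n + 1 + j

lemma vJfun_lt (J : Idn d n) {j : ℕ} (h : j < d) : vJfun d n J j = J.val ⟨j, h⟩ :=
  dif_pos h

noncomputable def Afun (d n : ℕ) (J : Idn d n) (s : ℕ) : ℕ → ℕ :=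
  fun t => sInf {a | s ≤ a ∧ a < d ∧ t < vJfun d n J a}

lemma step_sum (hd : 0 < d) (hdn : d ≤ n)
    (ω : Idn d n → ℕ → ℝ)
    (hω : ∀ m : Idn d n, idnJI m → ∀ s : Fin d,
      (∀ r : Fin d, (r : ℕ) < (s : ℕ) → m.val r = (r : ℕ) + 1) →
      m.val s ≠ (s : ℕ) + 1 →
      ω m = vecEps (m.val s) - vecEps (m.val s - 1))
    (J J' : Idn d n) (s : ℕ) (hs : s < d)
    (hJlow : ∀ t : Fin d, (t : ℕ) < s → J.val t = (t : ℕ) + 1)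
    (hJdev : J.val ⟨s, hs⟩ ≠ s + 1)
    (hJ'low : ∀ t : Fin d, (t : ℕ) ≤ s → J'.val t = (t : ℕ) + 1)
    (hJ'hi : ∀ t : Fin d, s < (t : ℕ) → J'.val t =
        J.val ⟨(t : ℕ) - 1, lt_of_le_of_lt (Nat.sub_le _ _) t.isLt⟩) :
    ∑ᶠ m ∈ {x : Idn d n | idnJI x ∧ idnLE x J} \ {x : Idn d n | idnJI x ∧ idnLE x J'}, ω m
      = vecEps (J.val (lastIdx d hd)) - vecEps (s + 1) := by
  have hd1 : d - 1 < d := Nat.sub_lt hd one_pos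
  set v := J.val (lastIdx d hd) with hv
  have hvdef : v = J.val ⟨d-1, hd1⟩ := rfl
  have hJs : s + 2 ≤ J.val ⟨s, hs⟩ := by
    have := idn_lb J s hs; omega
  have hvlb : d + 1 ≤ v := by
    have := idn_gap J (d-1) hd1 s hs (by omega)
    rw [hvdef]; omega
  have hvn : v ≤ n := (J.prop.2 _).2
  set A : ℕ → ℕ := Afun d n J s with hA
  -- main facts about A t
  have hAfact : ∀ t, s + 1 ≤ t → t < v →
      ∃ hAd : A t < d, s ≤ A t ∧ t < J.val ⟨A t, hAd⟩ ∧ A t + 1 ≤ t ∧ t + d ≤ n + A t ∧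
        (∀ h1d : A t - 1 < d, s < A t → J.val ⟨A t - 1, h1d⟩ ≤ t) := by
    intro t ht1 ht2
    have hne : {a | s ≤ a ∧ a < d ∧ t < vJfun d n J a}.Nonempty := by
      refine ⟨d - 1, ?_, hd1, ?_⟩
      · omega
      · rw [vJfun_lt J hd1]; omega
    have hmem : A t ∈ {a | s ≤ a ∧ a < d ∧ t < vJfun d n J a} := Nat.sInf_mem hne
    simp only [Set.mem_setOf_eq] at hmem
    obtain ⟨hsA, hAd, htv⟩ := hmem
    rw [vJfun_lt J hAd] at htv
    have hmin : ∀ b, b < A t → ¬(s ≤ b ∧ b < d ∧ t < vJfun d n J b) := by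
      intro b hb hmem
      exact Nat.notMem_of_lt_sInf hb hmem
    have hA1 : A t + 1 ≤ t := by
      rcases Nat.eq_or_lt_of_le hsA with h | h
      · omega
      · have h1d : A t - 1 < d := by omega
        have hnm := hmin (A t - 1) (by omega)
        have hvJ1 : vJfun d n J (A t - 1) ≤ t := by
          by_contra hc
          exact hnm ⟨by omega, h1d, by omega⟩
        rw [vJfun_lt J h1d] at hvJ1
        have := idn_gap J (A t - 1) h1d s hs (by omega)
        omega
    have hAn : t + d ≤ n + A t := by
      have := idn_gap J (d-1) hd1 (A t) hAd (by omega)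
      omega
    refine ⟨hAd, hsA, htv, hA1, hAn, ?_⟩
    intro h1d hslt
    have hnm := hmin (A t - 1) (by omega)
    by_contra hc
    exact hnm ⟨by omega, h1d, by rw [vJfun_lt J h1d]; omega⟩
  -- conditions for mkel
  have hcond : ∀ t, s + 1 ≤ t → t < v → A t < d ∧ A t + 1 ≤ t ∧ t + d ≤ n + A t := by
    intro t ht1 ht2
    obtain ⟨hAd, _, _, hA1, hAn, _⟩ := hAfact t ht1 ht2
    exact ⟨hAd, hA1, hAn⟩
  set g : ℕ → Idn d n := fun t => mkel d n (A t) t hd hdn with hg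
  have hgval : ∀ t (h : A t < d ∧ A t + 1 ≤ t ∧ t + d ≤ n + A t) (i : Fin d),
      (g t).val i = if (i : ℕ) < A t then (i : ℕ) + 1 else t + 1 + ((i : ℕ) - A t) := by
    intro t h i
    rw [hg]
    exact mkel_val hd hdn h i
  have hgJI : ∀ t, s + 1 ≤ t → t < v → idnJI (g t) := by
    intro t ht1 ht2
    rw [hg]
    exact mkel_ji hd hdn (hcond t ht1 ht2)
  have hgle : ∀ t, s + 1 ≤ t → t < v → idnLE (g t) J := by
    intro t ht1 ht2 i
    obtain ⟨hAd, hsA, htv, hA1, hAn, _⟩ := hAfact t ht1 ht2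
    rw [hgval t ⟨hAd, hA1, hAn⟩ i]
    have hlbJ := idn_lb' J i
    split_ifs with hcase
    · omega
    · have hgap := idn_gap J i.1 i.isLt (A t) hAd (by omega)
      have hei : J.val ⟨i.1, i.isLt⟩ = J.val i := rfl
      omega
  have hgnle : ∀ t, s + 1 ≤ t → t < v → ¬ idnLE (g t) J' := by
    intro t ht1 ht2 hcon
    obtain ⟨hAd, hsA, htv, hA1, hAn, hub⟩ := hAfact t ht1 ht2
    have hc := hcon ⟨A t, hAd⟩
    rw [hgval t ⟨hAd, hA1, hAn⟩ ⟨A t, hAd⟩,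
      if_neg (show ¬ ((⟨A t, hAd⟩ : Fin d) : ℕ) < A t from by exact lt_irrefl _)] at hc
    rcases Nat.eq_or_lt_of_le hsA with hcase | hcase
    · have hb : J'.val ⟨A t, hAd⟩ = A t + 1 := by
        rw [hJ'low ⟨A t, hAd⟩ (by exact hcase.ge)]
      omega
    · have h1d : A t - 1 < d := by omega
      have hub' := hub h1d hcase
      have hb : J'.val ⟨A t, hAd⟩ = J.val ⟨A t - 1, h1d⟩ := by
        rw [hJ'hi ⟨A t, hAd⟩ (by exact hcase)]
      omega
  have hgω : ∀ t, s + 1 ≤ t → t < v → ω (g t) = vecEps (t + 1) - vecEps t := by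
    intro t ht1 ht2
    obtain ⟨hAd, hsA, htv, hA1, hAn, _⟩ := hAfact t ht1 ht2
    have hJI : idnJI (g t) := hgJI t ht1 ht2
    have hval0 : (g t).val ⟨A t, hAd⟩ = t + 1 := by
      rw [hgval t ⟨hAd, hA1, hAn⟩ ⟨A t, hAd⟩,
        if_neg (show ¬ ((⟨A t, hAd⟩ : Fin d) : ℕ) < A t from by exact lt_irrefl _)]
      show t + 1 + (A t - A t) = t + 1
      omega
    have hlow2 : ∀ r : Fin d, (r : ℕ) < A t → (g t).val r = (r : ℕ) + 1 := by
      intro r hr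
      rw [hgval t ⟨hAd, hA1, hAn⟩ r, if_pos hr]
    have hdev2 : (g t).val ⟨A t, hAd⟩ ≠ A t + 1 := by
      rw [hval0]; omega
    have hres := hω (g t) hJI ⟨A t, hAd⟩ hlow2 hdev2
    rw [hval0] at hres
    simpa using hres
  have hSet : {x : Idn d n | idnJI x ∧ idnLE x J} \ {x : Idn d n | idnJI x ∧ idnLE x J'}
      = g '' Set.Icc (s + 1) (v - 1) := by
    ext m
    simp only [Set.mem_diff, Set.mem_setOf_eq, Set.mem_image, Set.mem_Icc]
    constructor
    · rintro ⟨⟨hJI, hleJ⟩, hnot⟩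
      have hnleJ' : ¬ idnLE m J' := fun hcon => hnot ⟨hJI, hcon⟩
      have hTne : {a | ∃ h : a < d, m.val ⟨a, h⟩ ≠ a + 1}.Nonempty := by
        by_contra hemp
        rw [Set.not_nonempty_iff_eq_empty] at hemp
        apply hnleJ'
        intro i
        have hmi : m.val i = (i : ℕ) + 1 := by
          by_contra hne
          have hmem : (i : ℕ) ∈ {a | ∃ h : a < d, m.val ⟨a, h⟩ ≠ a + 1} :=
            ⟨i.isLt, by simpa using hne⟩
          rw [hemp] at hmem
          exact hmem
        rw [hmi]
        exact idn_lb' J' i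
      have hmemT : sInf {a | ∃ h : a < d, m.val ⟨a, h⟩ ≠ a + 1} ∈
          {a | ∃ h : a < d, m.val ⟨a, h⟩ ≠ a + 1} := Nat.sInf_mem hTne
      set a0 := sInf {a | ∃ h : a < d, m.val ⟨a, h⟩ ≠ a + 1} with ha0def
      simp only [Set.mem_setOf_eq] at hmemT
      obtain ⟨ha0d, ha0dev⟩ := hmemT
      have hmin : ∀ b (hb : b < d), b < a0 → m.val ⟨b, hb⟩ = b + 1 := by
        intro b hb hlt
        by_contra hne
        exact Nat.notMem_of_lt_sInf hlt ⟨hb, hne⟩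
      have hlb0 := idn_lb m a0 ha0d
      have hlow0 : s ≤ a0 := by
        by_contra hcon
        push_neg at hcon
        have h1 : J.val ⟨a0, ha0d⟩ = a0 + 1 := hJlow ⟨a0, ha0d⟩ hcon
        have h2 := hleJ ⟨a0, ha0d⟩
        omega
      have hdev0 : a0 + 2 ≤ m.val ⟨a0, ha0d⟩ := by omega
      have htail := ji_tail hdn m hJI a0 ha0d hdev0
      have hleJ0 := hleJ ⟨a0, ha0d⟩
      have hgapv := idn_gap J (d-1) hd1 a0 ha0d (by omega)
      set t := m.val ⟨a0, ha0d⟩ - 1 with htdef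
      have hma0 : m.val ⟨a0, ha0d⟩ = t + 1 := by omega
      have ht1 : s + 1 ≤ t := by omega
      have ht2 : t < v := by rw [hvdef]; omega
      refine ⟨t, ⟨ht1, by omega⟩, ?_⟩
      have hAt : A t = a0 := by
        have ha0mem : a0 ∈ {a | s ≤ a ∧ a < d ∧ t < vJfun d n J a} := by
          refine ⟨hlow0, ha0d, ?_⟩
          rw [vJfun_lt J ha0d]
          omega
        have hle1 : A t ≤ a0 := Nat.sInf_le ha0mem
        rcases Nat.eq_or_lt_of_le hle1 with h | h
        · exact h
        · exfalso
          have hmemA : A t ∈ {a | s ≤ a ∧ a < d ∧ t < vJfun d n J a} :=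
            Nat.sInf_mem ⟨a0, ha0mem⟩
          obtain ⟨hsA2, hAd2, ht3⟩ := hmemA
          rw [vJfun_lt J hAd2] at ht3
          have hex : ∃ i : Fin d, J'.val i < m.val i := by
            by_contra hcon
            push_neg at hcon
            exact hnleJ' (fun r => hcon r)
          obtain ⟨i, hi⟩ := hex
          have hia0 : a0 ≤ (i : ℕ) := by
            by_contra hlt
            push_neg at hlt
            have h1 := hmin i.1 i.isLt hlt
            have hei : m.val ⟨i.1, i.isLt⟩ = m.val i := rfl
            have h2 := idn_lb' J' i
            omega
          have hsi : s < (i : ℕ) := by omega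
          have hJ'i := hJ'hi i hsi
          have hmi := htail i.1 i.isLt hia0
          have hei : m.val ⟨i.1, i.isLt⟩ = m.val i := rfl
          have ha01d : a0 - 1 < d := by omega
          have hi1d : (i : ℕ) - 1 < d := by omega
          have hbr : J.val ⟨(i : ℕ) - 1, lt_of_le_of_lt (Nat.sub_le _ _) i.isLt⟩ =
              J.val ⟨(i : ℕ) - 1, hi1d⟩ := rfl
          rw [hJ'i, hbr] at hi
          have hgap1 := idn_gap J ((i : ℕ) - 1) hi1d (a0 - 1) ha01d (by omega)
          have hgap2 := idn_gap J (a0 - 1) ha01d (A t) hAd2 (by omega)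
          omega
      have hcondt : A t < d ∧ A t + 1 ≤ t ∧ t + d ≤ n + A t := by
        rw [hAt]
        exact ⟨ha0d, by omega, by omega⟩
      apply Subtype.ext
      funext i
      rw [hgval t hcondt i, hAt]
      split_ifs with hcase
      · have h1 := hmin i.1 i.isLt hcase
        have hei : m.val ⟨i.1, i.isLt⟩ = m.val i := rfl
        omega
      · push_neg at hcase
        have h1 := htail i.1 i.isLt hcase
        have hei : m.val ⟨i.1, i.isLt⟩ = m.val i := rfl
        omega
    · rintro ⟨t, ⟨ht1, ht2⟩, rfl⟩
      have ht2' : t < v := by omega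
      exact ⟨⟨hgJI t ht1 ht2', hgle t ht1 ht2'⟩, fun hcon => hgnle t ht1 ht2' hcon.2⟩
  have hinj : Set.InjOn g (Set.Icc (s + 1) (v - 1)) := by
    have haux : ∀ t1 t2, t1 ∈ Set.Icc (s + 1) (v - 1) → t2 ∈ Set.Icc (s + 1) (v - 1) →
        g t1 = g t2 → A t1 ≤ A t2 → t1 = t2 := by
      intro t1 t2 h1 h2 heq hle
      obtain ⟨h11, h12⟩ := h1
      obtain ⟨h21, h22⟩ := h2
      obtain ⟨hAd1, _, _, hA11, hAn1, _⟩ := hAfact t1 h11 (by omega)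
      obtain ⟨hAd2, _, _, hA21, hAn2, _⟩ := hAfact t2 h21 (by omega)
      have hveq := congrArg (fun z : Idn d n => z.val ⟨A t1, hAd1⟩) heq
      rw [hgval t1 ⟨hAd1, hA11, hAn1⟩ ⟨A t1, hAd1⟩,
        hgval t2 ⟨hAd2, hA21, hAn2⟩ ⟨A t1, hAd1⟩,
        if_neg (show ¬ ((⟨A t1, hAd1⟩ : Fin d) : ℕ) < A t1 from by exact lt_irrefl _)] at hveq
      have hb : ((⟨A t1, hAd1⟩ : Fin d) : ℕ) = A t1 := rfl
      split_ifs at hveq with hcase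
      · omega
      · omega
    intro t1 h1 t2 h2 heq
    rcases le_total (A t1) (A t2) with h | h
    · exact haux t1 t2 h1 h2 heq h
    · exact (haux t2 t1 h2 h1 heq.symm h).symm
  rw [hSet, finsum_mem_image hinj, ← Finset.coe_Icc, finsum_mem_coe_finset]
  have hIcc : Finset.Icc (s + 1) (v - 1) = Finset.Ico (s + 1) v := by
    rw [← Finset.Ico_add_one_right_eq_Icc]
    congr 1
    omega
  rw [hIcc]
  rw [Finset.sum_congr rfl
    (fun t ht => hgω t (Finset.mem_Ico.mp ht).1 (Finset.mem_Ico.mp ht).2)]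
  exact telescope vecEps (s + 1) v (by omega)

end Aux2

/-- let `I ∈ I(d,n)` and let `I = I_0, I_1, …, I_k = [1, …, d]` be the
iteration of the pairing map, `s r` the length of the maximal initial segment
`[1, …, s r]` of `I_r`.  Then for each `r < k` the vector
`β_{r+1} = ω(Spec I_r \ Spec I_{r+1}) = ε_{i_d} − ε_{s+1}` equals the root
`α_{s+1, i_d − 1}` of `R_{d,n}` (where `i_d` is the last entry of `I_r`), and the set
`β(I)` of the corresponding pairs `(s r + 1, i_d − 1)` is an antichain of `R_{d,n}`. -/
theorem stmt16 (d n : ℕ) (hd : 0 < d) (hdn : d ≤ n)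
    (ω : Idn d n → ℕ → ℝ)
    (hω0 : ∀ m : Idn d n, (∀ r : Fin d, m.val r = (r : ℕ) + 1) → ω m = 0)
    (hω : ∀ m : Idn d n, idnJI m → ∀ s : Fin d,
      (∀ r : Fin d, (r : ℕ) < (s : ℕ) → m.val r = (r : ℕ) + 1) →
      m.val s ≠ (s : ℕ) + 1 →
      ω m = vecEps (m.val s) - vecEps (m.val s - 1))
    (I : Idn d n) (k : ℕ) (Iseq : ℕ → Idn d n) (sfun : ℕ → ℕ)
    (hI0 : Iseq 0 = I)
    (hbot : ∀ r : Fin d, (Iseq k).val r = (r : ℕ) + 1)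
    (hnotbot : ∀ r, r < k → ∃ t : Fin d, (Iseq r).val t ≠ (t : ℕ) + 1)
    (hstep : ∀ r, r < k →
      (∀ t : Fin d, (t : ℕ) < sfun r → (Iseq r).val t = (t : ℕ) + 1) ∧
      (∀ ht : sfun r < d, (Iseq r).val ⟨sfun r, ht⟩ ≠ sfun r + 1) ∧
      (∀ t : Fin d, (t : ℕ) ≤ sfun r → (Iseq (r + 1)).val t = (t : ℕ) + 1) ∧
      (∀ t : Fin d, sfun r < (t : ℕ) → (Iseq (r + 1)).val t =
        (Iseq r).val ⟨(t : ℕ) - 1, lt_of_le_of_lt (Nat.sub_le _ _) t.isLt⟩)) :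
    (∀ r, r < k →
      -- `β_{r+1}` is the root `α_{s+1, i_d − 1}`, an element of `R_{d,n}`
      (1 ≤ sfun r + 1 ∧ sfun r + 1 ≤ d ∧
        d ≤ (Iseq r).val (lastIdx d hd) - 1 ∧ (Iseq r).val (lastIdx d hd) - 1 ≤ n - 1) ∧
      ∑ᶠ m ∈ {x : Idn d n | idnJI x ∧ idnLE x (Iseq r)} \
          {x : Idn d n | idnJI x ∧ idnLE x (Iseq (r + 1))}, ω m
        = vecEps ((Iseq r).val (lastIdx d hd)) - vecEps (sfun r + 1)) ∧
    -- `β(I)` is an antichain in `R_{d,n}`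
    IsAntichain (· ≤ ·)
      {p : ℕ × ℕ | ∃ r, r < k ∧ p = (sfun r + 1, (Iseq r).val (lastIdx d hd) - 1)} := by
  have hsd : ∀ r, r < k → sfun r < d := by
    intro r hr
    obtain ⟨t, ht⟩ := hnotbot r hr
    by_contra hcon
    push_neg at hcon
    exact ht ((hstep r hr).1 t (by have := t.isLt; omega))
  have hlastlb : ∀ r, r < k → d + 1 ≤ (Iseq r).val (lastIdx d hd) := by
    intro r hr
    have hs := hsd r hr
    have hdev := (hstep r hr).2.1 hs
    have h1 := idn_lb (Iseq r) (sfun r) hs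
    have h2 := idn_gap (Iseq r) (d-1) (Nat.sub_lt hd one_pos) (sfun r) hs (by omega)
    have hb : (Iseq r).val ⟨d-1, Nat.sub_lt hd one_pos⟩ = (Iseq r).val (lastIdx d hd) := rfl
    omega
  have hstep1 : ∀ r, r + 1 < k → sfun r < sfun (r+1) ∧
      (Iseq (r+1)).val (lastIdx d hd) < (Iseq r).val (lastIdx d hd) := by
    intro r h1
    have hr : r < k := by omega
    have hs' : sfun (r+1) < d := hsd _ h1
    constructor
    · by_contra hle
      push_neg at hle
      exact (hstep (r+1) h1).2.1 hs'
        ((hstep r hr).2.2.1 ⟨sfun (r+1), hs'⟩ (by exact hle))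
    · have hsr : sfun r < d := hsd r hr
      have hlt : sfun r < d - 1 := by
        by_contra hge
        push_neg at hge
        obtain ⟨t, ht⟩ := hnotbot (r+1) h1
        exact ht ((hstep r hr).2.2.1 t (by have := t.isLt; omega))
      have heq := (hstep r hr).2.2.2 (lastIdx d hd) (by
        show sfun r < d - 1
        exact hlt)
      have hm : (Iseq r).val ⟨((lastIdx d hd : Fin d) : ℕ) - 1,
          lt_of_le_of_lt (Nat.sub_le _ _) (lastIdx d hd).isLt⟩ < (Iseq r).val (lastIdx d hd) :=
        (Iseq r).prop.1 (by
          rw [Fin.lt_def]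
          show d - 1 - 1 < d - 1
          omega)
      rw [heq]
      exact hm
  have hmono : ∀ r' r, r < r' → r' < k → sfun r < sfun r' ∧
      (Iseq r').val (lastIdx d hd) < (Iseq r).val (lastIdx d hd) := by
    intro r'
    induction r' with
    | zero => intro r hr hk; exact absurd hr (Nat.not_lt_zero r)
    | succ r' ih =>
      intro r hr hk
      have hone := hstep1 r' hk
      rcases Nat.lt_or_ge r r' with h | h
      · have := ih r h (by omega)
        constructor <;> omega
      · have : r = r' := by omega
        subst this
        exact hone
  constructor
  · intro r hr
    have hs := hsd r hr
    have hlb := hlastlb r hr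
    have hub := ((Iseq r).prop.2 (lastIdx d hd)).2
    refine ⟨⟨by omega, by omega, by omega, by omega⟩, ?_⟩
    exact step_sum hd hdn ω hω (Iseq r) (Iseq (r+1)) (sfun r) hs
      (hstep r hr).1 ((hstep r hr).2.1 hs) (hstep r hr).2.2.1 (hstep r hr).2.2.2
  · intro p hp q hq hne hle
    simp only [Set.mem_setOf_eq] at hp hq
    obtain ⟨r, hr, rfl⟩ := hp
    obtain ⟨r', hr', rfl⟩ := hq
    rw [Prod.mk_le_mk] at hle
    rcases lt_trichotomy r r' with h | h | h
    · have hm := hmono r' r h hr'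
      have h2 := hlastlb r' hr'
      have hle2 := hle.2
      omega
    · subst h; exact hne rfl
    · have hm := hmono r r' h hr
      have hle1 := hle.1
      omega
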